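/- Let z > 0 be real and n ≥ 0 an integer. Then the derivative of ν ↦ J_ν(z) at ν = n equals (log(z/2) + γ)·J_n(z) − (z/2)^n · ∑_{m=0}^∞ [(−z²/4)^m/(m!·(m+n)!)] · H_{m+n}, where γ is the Euler–Mascheroni constant and H_m = ∑_{j=1}^m 1/j (with H_0 = 0). -/

import Mathlib

open scoped BigOperators

/-- The reciprocal of the complex Gamma function, an entire function
(Mathlib's `Complex.Gamma` vanishes at nonpositive integers, so the inverse is `0` there). -/
noncomputable def Grec (t : ℂ) : ℂ := (Complex.Gamma t)⁻¹

/-- `G k t` is the `k`-th derivative of the reciprocal Gamma function at `t`. -/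
noncomputable def G (k : ℕ) (t : ℂ) : ℂ := iteratedDeriv k Grec t

/-- The Maclaurin coefficients of `1/Γ`: `c j = G^{(j)}(0)/j!`. -/
noncomputable def mcCoeff (j : ℕ) : ℂ := iteratedDeriv j Grec 0 / (j.factorial : ℂ)

/-- Bessel function of the first kind `J_ν(z)` for real `z > 0` and complex order `ν`,
with `(z/2)^ν = exp (ν log (z/2))`. -/
noncomputable def besselJ (z : ℝ) (ν : ℂ) : ℂ :=
  Complex.exp (ν * Complex.log ((z : ℂ) / 2)) *
    ∑' m : ℕ, (-(z : ℂ) ^ 2 / 4) ^ m / ((m.factorial : ℂ) * Complex.Gamma (ν + 1 + m))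

/-- Pochhammer symbol `(t)_m = t (t+1) ⋯ (t+m-1)`. -/
noncomputable def poch (t : ℂ) (m : ℕ) : ℂ := ∏ i ∈ Finset.range m, (t + i)

/-- `P m k t = (1/k!) dᵏ/dtᵏ (t)_m`. -/
noncomputable def P (m k : ℕ) (t : ℂ) : ℂ :=
  ((k.factorial : ℂ))⁻¹ * iteratedDeriv k (fun s => poch s m) t

/-- `Q m k t = (1/k!) dᵏ/dtᵏ (1/(t)_m)`. -/
noncomputable def Q (m k : ℕ) (t : ℂ) : ℂ :=
  ((k.factorial : ℂ))⁻¹ * iteratedDeriv k (fun s => (poch s m)⁻¹) t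

/-- Signed Stirling numbers of the first kind: `s(n,k)` is the coefficient of `x^k`
in `x(x-1)⋯(x-n+1)`. -/
noncomputable def stirS (n k : ℕ) : ℤ := (descPochhammer ℤ n).coeff k

/-- Modified generalized harmonic numbers `Ĥ_m^{(k)}`. -/
noncomputable def Hhat (m k : ℕ) : ℝ :=
  if m = 0 then (if k = 0 then 1 else 0)
  else ∑ j ∈ Finset.Icc 1 m, (-1 : ℝ) ^ (j - 1) * (m.choose j) / (j : ℝ) ^ k

/-- Digamma function `ψ = Γ'/Γ`. -/
noncomputable def digamma (t : ℂ) : ℂ := deriv Complex.Gamma t / Complex.Gamma t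

lemma Grec_diff : Differentiable ℂ Grec := Complex.differentiable_one_div_Gamma

lemma Grec_add_one {t : ℂ} (ht : t ≠ 0) : Grec (t + 1) = Grec t * t⁻¹ := by
  have h := Complex.one_div_Gamma_eq_self_mul_one_div_Gamma_add_one t
  unfold Grec
  rw [h, mul_comm t, mul_assoc, mul_inv_cancel₀ ht, mul_one]

lemma Grec_norm_shift (k : ℕ) {t : ℂ} (ht : 1/2 ≤ t.re) :
    ‖Grec (t + k)‖ ≤ ‖Grec t‖ * 2 ^ k := by
  induction k with
  | zero => simp
  | succ k ih =>
    have hk : (0:ℝ) ≤ (k:ℝ) := k.cast_nonneg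
    have hre : (1/2 : ℝ) ≤ (t + (k:ℂ)).re := by
      simp only [Complex.add_re, Complex.natCast_re]; linarith
    have hne : t + (k:ℂ) ≠ 0 := by
      intro h
      rw [h] at hre; simp at hre; linarith
    have h1 : ‖(t + (k:ℂ))⁻¹‖ ≤ 2 := by
      rw [norm_inv, show (2:ℝ) = (1/2)⁻¹ by norm_num]
      apply inv_anti₀ (by norm_num)
      calc (1/2 : ℝ) ≤ (t + (k:ℂ)).re := hre
        _ ≤ |(t + (k:ℂ)).re| := le_abs_self _
        _ ≤ ‖t + (k:ℂ)‖ := Complex.abs_re_le_norm _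
    have heq : Grec (t + ((k:ℕ)+1:ℕ)) = Grec (t + k) * (t + k)⁻¹ := by
      rw [show (t + (((k:ℕ)+1:ℕ):ℂ)) = (t + k) + 1 by push_cast; ring]
      exact Grec_add_one hne
    rw [heq]
    calc ‖Grec (t + k) * (t+(k:ℂ))⁻¹‖ = ‖Grec (t + k)‖ * ‖(t+(k:ℂ))⁻¹‖ := norm_mul _ _
      _ ≤ (‖Grec t‖ * 2 ^ k) * 2 :=
          mul_le_mul ih h1 (norm_nonneg _) (by positivity)
      _ = ‖Grec t‖ * 2 ^ (k+1) := by ring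

lemma deriv_Grec_nat (k : ℕ) :
    deriv Grec ((k:ℂ) + 1) =
      ((Real.eulerMascheroniConstant : ℂ) - ((harmonic k : ℚ) : ℂ)) / (k.factorial : ℂ) := by
  have hG := Complex.hasDerivAt_Gamma_nat k
  have hne : Complex.Gamma ((k:ℂ) + 1) ≠ 0 := by
    rw [Complex.Gamma_nat_eq_factorial]
    exact_mod_cast Nat.cast_ne_zero.mpr k.factorial_ne_zero
  have h2 : HasDerivAt Grec
      (-(↑k.factorial * (-↑Real.eulerMascheroniConstant + ↑(harmonic k))) /
        Complex.Gamma ((k:ℂ) + 1) ^ 2) ((k:ℂ) + 1) := hG.inv hne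
  rw [h2.deriv, Complex.Gamma_nat_eq_factorial]
  have hf : (k.factorial : ℂ) ≠ 0 := Nat.cast_ne_zero.mpr k.factorial_ne_zero
  field_simp
  ring

lemma harmonic_cast (k : ℕ) :
    ((harmonic k : ℚ) : ℂ) = ∑ j ∈ Finset.Icc 1 k, (1 : ℂ) / (j : ℂ) := by
  induction k with
  | zero => simp [harmonic]
  | succ k ih =>
    rw [harmonic_succ, Finset.sum_Icc_succ_top (by norm_num : 1 ≤ k + 1)]
    push_cast
    rw [← ih]
    push_cast
    ring

lemma mem_ball_re_im {n : ℕ} {ν : ℂ} (hν : ν ∈ Metric.ball ((n:ℂ)) (1/2)) :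
    |ν.re - n| < 1/2 ∧ |ν.im| < 1/2 := by
  have h : ‖ν - (n:ℂ)‖ < 1/2 := by rw [← dist_eq_norm]; exact hν
  constructor
  · calc |ν.re - n| = |(ν - (n:ℂ)).re| := by simp [Complex.sub_re]
      _ ≤ ‖ν - (n:ℂ)‖ := Complex.abs_re_le_norm _
      _ < 1/2 := h
  · calc |ν.im| = |(ν - (n:ℂ)).im| := by simp [Complex.sub_im]
      _ ≤ ‖ν - (n:ℂ)‖ := Complex.abs_im_le_norm _
      _ < 1/2 := h

lemma key_bound (n : ℕ) : ∃ M : ℝ, 0 ≤ M ∧ ∀ (m : ℕ), ∀ ν ∈ Metric.ball ((n:ℂ)) (1/2),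
    ‖deriv Grec (ν + 1 + m)‖ ≤ M * 2 ^ m := by
  obtain ⟨C, hC⟩ := (isCompact_closedBall (0:ℂ) (n + 10)).exists_bound_of_continuousOn
    Grec_diff.continuous.continuousOn
  have hC0 : 0 ≤ max C 0 := le_max_right _ _
  refine ⟨max C 0, hC0, fun m ν hν => ?_⟩
  obtain ⟨hre, him⟩ := mem_ball_re_im hν
  rw [abs_lt] at hre him
  have hνn : ‖ν‖ ≤ (n:ℝ) + 1 := by
    calc ‖ν‖ ≤ |ν.re| + |ν.im| := Complex.norm_le_abs_re_add_abs_im _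
      _ ≤ ((n:ℝ) + 1/2) + 1/2 := by
          gcongr
          · rw [abs_le]; constructor <;> [linarith [hre.1]; linarith [hre.2]]
          · rw [abs_le]; constructor <;> [linarith [him.1]; linarith [him.2]]
      _ = (n:ℝ) + 1 := by ring
  have hsphere : ∀ s ∈ Metric.sphere (ν + 1 + (m:ℂ)) 1, ‖Grec s‖ ≤ max C 0 * 2 ^ m := by
    intro s hs
    have hds : ‖s - (ν + 1 + m)‖ = 1 := by rw [← dist_eq_norm]; exact hs
    match m with
    | 0 =>
      have hsn : ‖s‖ ≤ (n:ℝ) + 10 := by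
        have h1 : s = (s - (ν + 1 + ((0:ℕ):ℂ))) + ν + 1 + ((0:ℕ):ℂ) := by ring
        calc ‖s‖ = ‖(s - (ν + 1 + ((0:ℕ):ℂ))) + ν + 1 + ((0:ℕ):ℂ)‖ := by rw [← h1]
          _ ≤ ‖(s - (ν + 1 + ((0:ℕ):ℂ))) + ν + 1‖ + ‖((0:ℕ):ℂ)‖ := norm_add_le _ _
          _ ≤ (‖(s - (ν + 1 + ((0:ℕ):ℂ))) + ν‖ + ‖(1:ℂ)‖) + ‖((0:ℕ):ℂ)‖ := by
              gcongr; exact norm_add_le _ _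
          _ ≤ ((‖s - (ν + 1 + ((0:ℕ):ℂ))‖ + ‖ν‖) + ‖(1:ℂ)‖) + ‖((0:ℕ):ℂ)‖ := by
              gcongr; exact norm_add_le _ _
          _ ≤ ((1 + ((n:ℝ)+1)) + 1) + 0 := by rw [hds]; gcongr <;> simp
          _ ≤ (n:ℝ) + 10 := by linarith
      calc ‖Grec s‖ ≤ C := hC s (by simpa [Metric.mem_closedBall, dist_eq_norm] using hsn)
        _ ≤ max C 0 * 2 ^ 0 := by simp [le_max_left]
    | (k+1) =>
      set t := s - (k:ℂ) with ht
      have hts : s = t + k := by rw [ht]; ring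
      have htre : 1/2 ≤ t.re := by
        have h1 : |(s - (ν + 1 + ((k+1:ℕ):ℂ))).re| ≤ 1 := by
          calc |(s - (ν + 1 + ((k+1:ℕ):ℂ))).re| ≤ ‖s - (ν + 1 + ((k+1:ℕ):ℂ))‖ :=
              Complex.abs_re_le_norm _
            _ = 1 := hds
        have h2 := (abs_le.mp h1).1
        have h3 : (s - (ν + 1 + ((k+1:ℕ):ℂ))).re = s.re - ν.re - 1 - (k+1) := by
          simp [Complex.sub_re, Complex.add_re]; push_cast; ring
        have hn0 : (0:ℝ) ≤ n := n.cast_nonneg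
        rw [h3] at h2
        simp only [ht, Complex.sub_re, Complex.natCast_re]
        linarith
      have htnorm : ‖t‖ ≤ (n:ℝ) + 10 := by
        have h1 : t = (s - (ν + 1 + ((k+1:ℕ):ℂ))) + ν + 2 := by rw [ht]; push_cast; ring
        calc ‖t‖ = ‖(s - (ν + 1 + ((k+1:ℕ):ℂ))) + ν + 2‖ := by rw [← h1]
          _ ≤ ‖(s - (ν + 1 + ((k+1:ℕ):ℂ))) + ν‖ + ‖(2:ℂ)‖ := norm_add_le _ _
          _ ≤ (‖s - (ν + 1 + ((k+1:ℕ):ℂ))‖ + ‖ν‖) + ‖(2:ℂ)‖ := by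
              gcongr; exact norm_add_le _ _
          _ ≤ (1 + ((n:ℝ)+1)) + 2 := by
              rw [hds]; gcongr <;> first | exact hνn | simp
          _ ≤ (n:ℝ) + 10 := by linarith
      calc ‖Grec s‖ = ‖Grec (t + k)‖ := by rw [← hts]
        _ ≤ ‖Grec t‖ * 2 ^ k := Grec_norm_shift k htre
        _ ≤ max C 0 * 2 ^ (k+1) := by
            have h1 : ‖Grec t‖ ≤ max C 0 := le_trans
              (hC t (by simpa [Metric.mem_closedBall, dist_eq_norm] using htnorm)) (le_max_left _ _)
            calc ‖Grec t‖ * 2 ^ k ≤ max C 0 * 2 ^ k := by gcongr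
              _ ≤ max C 0 * 2 ^ (k+1) := by
                  have : (2:ℝ)^k ≤ 2^(k+1) := by gcongr <;> norm_num
                  exact mul_le_mul_of_nonneg_left this hC0
  have := Complex.norm_deriv_le_of_forall_mem_sphere_norm_le (one_pos)
    (Grec_diff.diffContOnCl) hsphere
  simpa using this

lemma hasDerivAt_term (w : ℂ) (m : ℕ) (ν : ℂ) :
    HasDerivAt (fun ν : ℂ => w ^ m / ((m.factorial : ℂ) * Complex.Gamma (ν + 1 + m)))
      (w ^ m / (m.factorial : ℂ) * deriv Grec (ν + 1 + m)) ν := by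
  have h0 : HasDerivAt (fun ν : ℂ => ν + (1 + m)) 1 ν := (hasDerivAt_id ν).add_const _
  have h1 : HasDerivAt (fun ν : ℂ => Grec (ν + (1 + m)))
      (deriv Grec (ν + (1 + m)) * 1) ν :=
    by have := ((Grec_diff (ν + (1 + m))).hasDerivAt).comp ν h0; exact this
  have h2 := h1.const_mul (w ^ m / (m.factorial : ℂ))
  have hfun : (fun ν : ℂ => w ^ m / ((m.factorial : ℂ) * Complex.Gamma (ν + 1 + m)))
      = fun ν : ℂ => w ^ m / (m.factorial : ℂ) * Grec (ν + (1 + m)) := by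
    funext ν
    rw [Grec, div_mul_eq_div_div, div_eq_mul_inv, add_assoc]
  rw [hfun]
  simpa [add_assoc, mul_comm] using h2

/-- First derivative at a nonnegative integer order:
`∂/∂ν J_ν(z)|_{ν=n} = (log(z/2) + γ) Jₙ(z) − (z/2)ⁿ ∑ₘ (−z²/4)ᵐ/(m!(m+n)!) H_{m+n}`. -/
theorem deriv_besselJ_nat (z : ℝ) (hz : 0 < z) (n : ℕ) :
    deriv (fun ν => besselJ z ν) (n : ℂ) =
      (Complex.log ((z : ℂ) / 2) + (Real.eulerMascheroniConstant : ℂ)) * besselJ z (n : ℂ) -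
        Complex.exp ((n : ℂ) * Complex.log ((z : ℂ) / 2)) *
          ∑' m : ℕ, (-(z : ℂ) ^ 2 / 4) ^ m / ((m.factorial : ℂ) * ((m + n).factorial : ℂ)) *
            ∑ j ∈ Finset.Icc 1 (m + n), (1 : ℂ) / (j : ℂ) := by
  obtain ⟨M, hM0, hM⟩ := key_bound n
  set w : ℂ := -(z:ℂ)^2/4 with hw
  set L : ℂ := Complex.log ((z:ℂ)/2) with hLdef
  set u : ℕ → ℝ := fun m => M * ((2 * ‖w‖)^m / m.factorial) with hu
  have hu_sum : Summable u := (Real.summable_pow_div_factorial _).mul_left M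
  have hnball : (n:ℂ) ∈ Metric.ball ((n:ℂ)) (1/2) := Metric.mem_ball_self (by norm_num)
  have hGfact : ∀ m : ℕ, Complex.Gamma ((n:ℂ) + 1 + m) = ((m+n).factorial : ℂ) := by
    intro m
    rw [show (n:ℂ) + 1 + m = (((m+n:ℕ)):ℂ) + 1 by push_cast; ring,
      Complex.Gamma_nat_eq_factorial]
  have hbound : ∀ m : ℕ, ∀ ν ∈ Metric.ball ((n:ℂ)) (1/2),
      ‖w^m / (m.factorial : ℂ) * deriv Grec (ν + 1 + m)‖ ≤ u m := by
    intro m ν hν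
    rw [norm_mul]
    have h1 : ‖w^m / (m.factorial : ℂ)‖ = ‖w‖^m / m.factorial := by
      rw [norm_div, norm_pow, Complex.norm_natCast]
    rw [h1]
    calc ‖w‖^m / m.factorial * ‖deriv Grec (ν + 1 + m)‖
        ≤ ‖w‖^m / m.factorial * (M * 2^m) :=
          mul_le_mul_of_nonneg_left (hM m ν hν) (by positivity)
      _ = u m := by rw [hu]; simp only; rw [mul_pow]; ring
  have hcenter : Summable (fun m : ℕ => w^m / ((m.factorial : ℂ) * Complex.Gamma ((n:ℂ) + 1 + m))) := by
    apply Summable.of_norm_bounded (g := fun m : ℕ => ‖w‖^m / m.factorial)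
      (Real.summable_pow_div_factorial _)
    intro m
    rw [hGfact m, norm_div, norm_pow, norm_mul, Complex.norm_natCast, Complex.norm_natCast,
      div_mul_eq_div_div]
    apply div_le_self (by positivity)
    exact_mod_cast (m+n).factorial_pos
  have hS : HasDerivAt (fun ν : ℂ => ∑' m : ℕ, w^m / ((m.factorial : ℂ) * Complex.Gamma (ν + 1 + m)))
      (∑' m : ℕ, w^m / (m.factorial : ℂ) * deriv Grec ((n:ℂ) + 1 + m)) (n:ℂ) :=
    hasDerivAt_tsum_of_isPreconnected hu_sum Metric.isOpen_ball
      (convex_ball _ _).isPreconnected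
      (fun m ν _ => hasDerivAt_term w m ν) hbound hnball hcenter hnball
  have hE : HasDerivAt (fun ν : ℂ => Complex.exp (ν * L))
      (Complex.exp ((n:ℂ) * L) * L) (n:ℂ) := (hasDerivAt_mul_const L).cexp
  have hJ := hE.mul hS
  have hderiv : deriv (fun ν => besselJ z ν) (n:ℂ) =
      Complex.exp ((n:ℂ) * L) * L *
        (∑' m : ℕ, w^m / ((m.factorial : ℂ) * Complex.Gamma ((n:ℂ) + 1 + m))) +
      Complex.exp ((n:ℂ) * L) *
        (∑' m : ℕ, w^m / (m.factorial : ℂ) * deriv Grec ((n:ℂ) + 1 + m)) := by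
    have : (fun ν => besselJ z ν) = fun ν : ℂ =>
        Complex.exp (ν * L) * ∑' m : ℕ, w^m / ((m.factorial : ℂ) * Complex.Gamma (ν + 1 + m)) := by
      funext ν; rw [besselJ]
    rw [this]
    exact hJ.deriv
  rw [hderiv]
  -- now compute the derivative sum
  set γ : ℂ := (Real.eulerMascheroniConstant : ℂ) with hγ
  set a : ℕ → ℂ := fun m => w^m / ((m.factorial : ℂ) * ((m+n).factorial : ℂ)) with ha
  set Hc : ℕ → ℂ := fun m => ∑ j ∈ Finset.Icc 1 (m + n), (1 : ℂ) / (j : ℂ) with hHc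
  have hterm : ∀ m : ℕ, w^m / (m.factorial : ℂ) * deriv Grec ((n:ℂ) + 1 + m)
      = γ * a m - a m * Hc m := by
    intro m
    rw [show (n:ℂ) + 1 + m = (((m+n:ℕ)):ℂ) + 1 by push_cast; ring,
      deriv_Grec_nat (m+n), harmonic_cast (m+n)]
    have h1 : (m.factorial : ℂ) ≠ 0 := Nat.cast_ne_zero.mpr m.factorial_ne_zero
    have h2 : ((m+n).factorial : ℂ) ≠ 0 := Nat.cast_ne_zero.mpr (m+n).factorial_ne_zero
    rw [ha, hHc]
    field_simp
    ring
  have ha_sum : Summable a := by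
    have := hcenter
    apply this.congr
    intro m; rw [hGfact m]
  have hsum1 : Summable (fun m => γ * a m) := ha_sum.mul_left γ
  have hD_sum : Summable (fun m : ℕ => w^m / (m.factorial : ℂ) * deriv Grec ((n:ℂ) + 1 + m)) :=
    Summable.of_norm_bounded hu_sum (fun m => hbound m (n:ℂ) hnball)
  have hsum2 : Summable (fun m => a m * Hc m) := by
    apply (hsum1.sub hD_sum).congr
    intro m; rw [hterm m]; ring
  have hDval : (∑' m : ℕ, w^m / (m.factorial : ℂ) * deriv Grec ((n:ℂ) + 1 + m))
      = γ * (∑' m, a m) - ∑' m, a m * Hc m := by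
    rw [tsum_congr hterm, hsum1.tsum_sub hsum2, tsum_mul_left]
  rw [hDval]
  have hbess : besselJ z (n:ℂ) = Complex.exp ((n:ℂ) * L) * ∑' m, a m := by
    rw [besselJ]
    congr 1
    exact tsum_congr fun m => by rw [hGfact m]
  have hS0 : (∑' m : ℕ, w^m / ((m.factorial : ℂ) * Complex.Gamma ((n:ℂ) + 1 + m))) = ∑' m, a m :=
    tsum_congr fun m => by rw [hGfact m]
  rw [hS0, hbess]
  ring
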